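/- For a sequence satisfying x_{n+2k+1} x_n = x_{n+2k} x_{n+1} + a(x_{n+k} + x_{n+k+1}) for all n (all terms nonzero), the determinant δ_n of the 3×3 matrix with entries x_{n+i+2kj} for 0 ≤ i, j ≤ 2 satisfies δ_{n+k} = δ_n for all n. -/
import Mathlib


set_option maxHeartbeats 4000000 in
theorem heiho_wronskian_k_invariant {F : Type*} [Field F] (k : ℕ) (hk : 0 < k) (a : F)
    (x : ℤ → F) (hnz : ∀ n, x n ≠ 0)
    (hrec : ∀ n : ℤ, x (n + 2 * k + 1) * x n =
      x (n + 2 * k) * x (n + 1) + a * (x (n + k) + x (n + k + 1)))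
    (δ : ℤ → F)
    (hδ : ∀ n : ℤ, δ n =
      Matrix.det !![x n,       x (n + 2 * k),     x (n + 4 * k);
                    x (n + 1), x (n + 2 * k + 1), x (n + 4 * k + 1);
                    x (n + 2), x (n + 2 * k + 2), x (n + 4 * k + 2)]) :
    ∀ n : ℤ, δ (n + k) = δ n := by
  intro n
  have hB1 : x (n + 2 * k + 1) ≠ 0 := hnz _
  have hC1 : x (n + 3 * k + 1) ≠ 0 := hnz _
  have hP := hδ n
  have hA := hδ (n + k)
  rw [Matrix.det_fin_three] at hP hA
  simp only [Matrix.of_apply, Matrix.cons_val_zero, Matrix.cons_val_one, Matrix.cons_val_two,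
    Matrix.head_cons, Matrix.tail_cons, Matrix.cons_val', Matrix.empty_val',
    Matrix.cons_val_fin_one, Matrix.head_fin_const] at hP hA
  have r0 := hrec n
  have r1 := hrec (n + 1)
  have r2 := hrec (n + k)
  have r3 := hrec (n + k + 1)
  have r4 := hrec (n + 2 * k)
  have r5 := hrec (n + 2 * k + 1)
  have r6 := hrec (n + 3 * k)
  have r7 := hrec (n + 3 * k + 1)
  have key : δ (n + k) * (x (n + 2 * k + 1) * x (n + 3 * k + 1)) =
      δ n * (x (n + 2 * k + 1) * x (n + 3 * k + 1)) := by
    linear_combination (norm := ring_nf)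
      (x (n + 2 * k + 1) * x (n + 3 * k + 1)) * hA
      - (x (n + 2 * k + 1) * x (n + 3 * k + 1)) * hP
      + (-(x (n + 3 * k + 1) * (x (n + 2 * k + 1) * x (n + 4 * k + 2)
          - x (n + 4 * k + 1) * x (n + 2 * k + 2)))) * r0
      + (a * x (n + 3 * k + 1) * (x (n + 3 * k) + x (n + 3 * k + 1))) * r1
      + (x (n + 2 * k + 1) * (x (n + 3 * k + 1) * x (n + 5 * k + 2)
          - x (n + 5 * k + 1) * x (n + 3 * k + 2))
        + x (n + k + 1) * x (n + 4 * k + 1) * x (n + 3 * k + 2)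
        - x (n + 4 * k + 1) * x (n + 3 * k + 1) * x (n + k + 2)
        - a * x (n + 2 * k + 1) * (x (n + 4 * k + 1) + x (n + 4 * k + 2))) * r2
      + (x (n + 4 * k + 1) * (x (n + k + 1) * x (n + 3 * k)
          - x (n + 3 * k + 1) * x (n + k))) * r3
      + (x (n + 3 * k + 1) * (x (n + 1) * x (n + 2 * k + 2)
          - x (n + 2 * k + 1) * x (n + 2))
        + x (n + k + 1) * x (n + 2 * k + 1) * x (n + 4 * k + 2)
        - x (n + k + 1) * x (n + 4 * k + 1) * x (n + 2 * k + 2)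
        - a * x (n + 3 * k + 1) * (x (n + k + 1) + x (n + k + 2))) * r4
      + (x (n + k + 1) * (x (n + 2 * k + 1) * x (n + 4 * k)
          - x (n + 4 * k + 1) * x (n + 2 * k))) * r5
      + (-(x (n + 2 * k + 1) * (x (n + k + 1) * x (n + 3 * k + 2)
          - x (n + 3 * k + 1) * x (n + k + 2)))) * r6
      + (a * x (n + 2 * k + 1) * (x (n + 2 * k) + x (n + 2 * k + 1))) * r7
  exact mul_right_cancel₀ (mul_ne_zero hB1 hC1) key
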